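/- A Sturmian word of slope α has bounded fractional index (i.e., sup over nonempty factors w of sup{k ∈ ℚ : w^k ∈ L(α)} is finite) if and only if the sequence of partial quotients (a_k) of α is bounded. -/

import Mathlib

set_option linter.unusedSectionVars false
set_option linter.unusedVariables false


/-- The Gauss map iterates: `gaussIter α n` is the `n`-th complete quotient of `α`. -/
noncomputable def gaussIter (α : ℝ) : ℕ → ℝ :=
  fun n => (fun x : ℝ => (Int.fract x)⁻¹)^[n] α

/-- The partial quotients of the continued fraction expansion of `α`:
`α = [cfA α 0; cfA α 1, cfA α 2, …]`. -/
noncomputable def cfA (α : ℝ) (n : ℕ) : ℤ := ⌊gaussIter α n⌋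

/-- The denominators `q_k` of the convergents of `α`. -/
noncomputable def cfQ (α : ℝ) : ℕ → ℤ
  | 0 => 1
  | 1 => cfA α 1
  | (n + 2) => cfA α (n + 2) * cfQ α (n + 1) + cfQ α n

/-- The `n`-th letter of the standard Sturmian word of slope `α`: the coding of the orbit
of the point `α` under rotation by `α`, with `I_0 = [0, 1-α)` coding `0` and
`I_1 = [1-α, 1)` coding `1`. -/
noncomputable def sturmianLetter (α : ℝ) (n : ℕ) : ℕ :=
  if Int.fract (((n : ℝ) + 1) * α) < 1 - α then 0 else 1

/-- The language `L(α)`: `w` is a factor of the (standard) Sturmian word of slope `α`.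
(For irrational `α` this language is the same for every Sturmian word of slope `α`.) -/
noncomputable def InLang (α : ℝ) (w : List ℕ) : Prop :=
  ∃ i : ℕ, w = (List.range w.length).map (fun j => sturmianLetter α (i + j))

/-- The fractional power `w^r ∈ L(α)`: for `w = uv` and `r = n + |u|/|w|`, the word
`(uv)^n u` is in `L(α)`. -/
noncomputable def FracPowInLang (α : ℝ) (w : List ℕ) (r : ℚ) : Prop :=
  ∃ (n : ℕ) (u : List ℕ), u <+: w ∧ r = n + (u.length : ℚ) / (w.length : ℚ) ∧
    InLang α ((List.replicate n w).flatten ++ u)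

namespace SturmAux

noncomputable def cfP (α : ℝ) : ℕ → ℤ
  | 0 => 0
  | 1 => 1
  | (n + 2) => cfA α (n + 2) * cfP α (n + 1) + cfP α n

noncomputable def th (α : ℝ) (k : ℕ) : ℝ := (cfQ α k : ℝ) * α - (cfP α k : ℝ)

noncomputable def et (α : ℝ) (k : ℕ) : ℝ := |th α k|

variable {α : ℝ} (hα : Irrational α) (h0 : 0 < α) (h1 : α < 1)

lemma gauss_zero : gaussIter α 0 = α := rfl

lemma gauss_succ (k : ℕ) : gaussIter α (k + 1) = (Int.fract (gaussIter α k))⁻¹ := by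
  simp [gaussIter, Function.iterate_succ_apply']

lemma fract_irrational {x : ℝ} (hx : Irrational x) : Irrational (Int.fract x) := by
  rw [← Int.self_sub_floor x]; exact hx.sub_intCast ⌊x⌋

lemma fract_pos {x : ℝ} (hx : Irrational x) : 0 < Int.fract x :=
  lt_of_le_of_ne (Int.fract_nonneg x) (Ne.symm (fract_irrational hx).ne_zero)

include hα in
lemma gauss_props : ∀ k, Irrational (gaussIter α k) ∧ (1 ≤ k → 1 < gaussIter α k) := by
  intro k
  induction k with
  | zero => exact ⟨hα, by omega⟩
  | succ k ih =>
    have hirr : Irrational (Int.fract (gaussIter α k)) := fract_irrational ih.1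
    have hp : 0 < Int.fract (gaussIter α k) := fract_pos ih.1
    have hl : Int.fract (gaussIter α k) < 1 := Int.fract_lt_one _
    exact ⟨by rw [gauss_succ]; exact hirr.inv, fun _ => by
      rw [gauss_succ]; exact (one_lt_inv_iff₀).2 ⟨hp, hl⟩⟩

include hα in
lemma gauss_irr (k : ℕ) : Irrational (gaussIter α k) := (gauss_props hα k).1

include hα in
lemma gauss_gt_one {k : ℕ} (hk : 1 ≤ k) : 1 < gaussIter α k := (gauss_props hα k).2 hk

include hα in
lemma cfA_pos {k : ℕ} (hk : 1 ≤ k) : 1 ≤ cfA α k := by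
  have h := gauss_gt_one hα (k := k) hk
  exact Int.le_floor.2 (by exact_mod_cast h.le)

include h0 h1 in
lemma cfA_zero' : cfA α 0 = 0 := by
  simp only [cfA, gauss_zero]
  exact Int.floor_eq_zero_iff.2 ⟨h0.le, h1⟩

lemma gauss_rel (k : ℕ) :
    Int.fract (gaussIter α k) = (gaussIter α (k + 1))⁻¹ := by
  rw [gauss_succ, inv_inv]

lemma gauss_fract (k : ℕ) :
    Int.fract (gaussIter α k) = gaussIter α k - cfA α k := by
  simp only [cfA]; exact (Int.self_sub_floor _).symm

-- chunk 2 --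

lemma q_rec (k : ℕ) : cfQ α (k + 2) = cfA α (k + 2) * cfQ α (k + 1) + cfQ α k := rfl
lemma p_rec (k : ℕ) : cfP α (k + 2) = cfA α (k + 2) * cfP α (k + 1) + cfP α k := rfl
lemma q_zero : cfQ α 0 = 1 := rfl
lemma q_one : cfQ α 1 = cfA α 1 := rfl
lemma p_zero : cfP α 0 = 0 := rfl
lemma p_one : cfP α 1 = 1 := rfl

lemma th_zero : th α 0 = α := by simp [th, q_zero, p_zero]

lemma th_rec (k : ℕ) : th α (k + 2) = (cfA α (k + 2) : ℝ) * th α (k + 1) + th α k := by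
  simp only [th, q_rec, p_rec]; push_cast; ring

include hα h0 h1 in
lemma th_key : ∀ k, th α (k + 1) * gaussIter α (k + 2) = - th α k := by
  intro k
  induction k with
  | zero =>
    have hx1 : gaussIter α 1 = α⁻¹ := by
      rw [gauss_succ 0, gauss_zero, Int.fract_eq_self.2 ⟨h0.le, h1⟩]
    have hf1 : Int.fract (gaussIter α 1) = α⁻¹ - cfA α 1 := by
      rw [gauss_fract, hx1]
    have hfpos : 0 < Int.fract (gaussIter α 1) := fract_pos (gauss_irr hα 1)
    have hne : α⁻¹ - (cfA α 1 : ℝ) ≠ 0 := by rw [← hf1]; exact ne_of_gt hfpos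
    have hαne : α ≠ 0 := ne_of_gt h0
    rw [gauss_succ 1, hf1]
    have hth1 : th α 1 = (cfA α 1 : ℝ) * α - 1 := by simp [th, q_one, p_one]
    have key : α⁻¹ - (cfA α 1 : ℝ) = (1 - (cfA α 1 : ℝ) * α) / α := by
      field_simp <;> ring
    have hne2 : (1 : ℝ) - (cfA α 1 : ℝ) * α ≠ 0 := by
      intro h
      apply hne
      rw [key, h, zero_div]
    rw [hth1, th_zero, key, inv_div]
    field_simp
    ring
  | succ k ih =>
    have hx : 0 < gaussIter α (k + 2) := lt_trans one_pos (gauss_gt_one hα (by omega))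
    have hx3ne : gaussIter α (k + 3) ≠ 0 :=
      ne_of_gt (lt_trans one_pos (gauss_gt_one hα (by omega)))
    have hmul : (gaussIter α (k + 2) - (cfA α (k + 2) : ℝ)) * gaussIter α (k + 3) = 1 := by
      rw [← gauss_fract, gauss_rel (k + 2)]
      exact inv_mul_cancel₀ hx3ne
    rw [th_rec]
    linear_combination gaussIter α (k+3) * ih - th α (k+1) * hmul

include hα h0 h1 in
lemma th_pos : ∀ k, 0 < (-1 : ℝ)^k * th α k := by
  intro k
  induction k with
  | zero => simpa [th_zero] using h0
  | succ k ih =>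
    have hkey := th_key hα h0 h1 k
    have hx : 1 < gaussIter α (k + 2) := gauss_gt_one hα (by omega)
    have hxpos : 0 < gaussIter α (k + 2) := lt_trans one_pos hx
    have hA : (-1:ℝ)^(k+1) * th α (k+1) = ((-1:ℝ)^k * th α k) / gaussIter α (k+2) := by
      rw [eq_div_iff (ne_of_gt hxpos), pow_succ]
      linear_combination (-(-1:ℝ)^k) * hkey
    rw [hA]; exact div_pos ih hxpos

include hα h0 h1 in
lemma th_ne (k : ℕ) : th α k ≠ 0 := by
  have := th_pos hα h0 h1 k
  intro h; rw [h, mul_zero] at this; exact lt_irrefl 0 this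

include hα h0 h1 in
lemma et_pos (k : ℕ) : 0 < et α k := abs_pos.2 (th_ne hα h0 h1 k)

include hα h0 h1 in
lemma et_eq (k : ℕ) : et α k = (-1 : ℝ)^k * th α k := by
  have h := th_pos hα h0 h1 k
  have : |(-1 : ℝ)^k * th α k| = (-1 : ℝ)^k * th α k := abs_of_pos h
  rw [← this, abs_mul, abs_pow, abs_neg, abs_one, one_pow, one_mul]
  rfl

include hα h0 h1 in
lemma et_key (k : ℕ) : et α (k + 1) * gaussIter α (k + 2) = et α k := by
  have hkey := th_key hα h0 h1 k
  have hxpos : 0 < gaussIter α (k + 2) := lt_trans one_pos (gauss_gt_one hα (by omega))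
  have : |th α (k+1) * gaussIter α (k+2)| = |th α (k+1)| * gaussIter α (k+2) := by
    rw [abs_mul, abs_of_pos hxpos]
  rw [et, et, ← this, hkey, abs_neg]

include hα h0 h1 in
lemma et_dec (k : ℕ) : et α (k + 1) < et α k := by
  have hk := et_key hα h0 h1 k
  have hx : 1 < gaussIter α (k + 2) := gauss_gt_one hα (by omega)
  nlinarith [et_pos hα h0 h1 (k + 1)]

include hα h0 h1 in
lemma et_le_of_le {j k : ℕ} (h : j ≤ k) : et α k ≤ et α j := by
  induction k with
  | zero => simp_all
  | succ k ih =>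
    rcases Nat.lt_or_ge j (k+1) with h' | h'
    · exact le_trans (et_dec hα h0 h1 k).le (ih (by omega))
    · have : j = k + 1 := by omega
      simp [this]

include hα in
lemma q_pos_mono : ∀ k, 1 ≤ cfQ α k ∧ cfQ α k ≤ cfQ α (k + 1) := by
  intro k
  induction k with
  | zero =>
    refine ⟨le_refl _, ?_⟩
    rw [q_zero, q_one]; exact cfA_pos hα (by omega)
  | succ k ih =>
    have ha : 1 ≤ cfA α (k + 2) := cfA_pos hα (by omega)
    refine ⟨le_trans ih.1 ih.2, ?_⟩
    rw [q_rec]; nlinarith [ih.1, ih.2]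

include hα in
lemma q_pos (k : ℕ) : 1 ≤ cfQ α k := (q_pos_mono hα k).1

include hα in
lemma q_mono (k : ℕ) : cfQ α k ≤ cfQ α (k + 1) := (q_pos_mono hα k).2

include hα in
lemma q_ge : ∀ k : ℕ, (k : ℤ) ≤ cfQ α k := by
  intro k
  induction k using Nat.strong_induction_on with
  | _ k ih =>
    match k with
    | 0 => simp [q_zero]
    | 1 => simpa [q_one] using cfA_pos hα (le_refl 1)
    | (k + 2) =>
      have h1' := ih (k + 1) (by omega)
      have h2 := q_pos hα k
      have ha : 1 ≤ cfA α (k + 2) := cfA_pos hα (by omega)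
      have hq1 : 1 ≤ cfQ α (k+1) := q_pos hα (k+1)
      push_cast at h1'
      have hmm := mul_le_mul_of_nonneg_right ha (by linarith : (0:ℤ) ≤ cfQ α (k+1))
      rw [q_rec]; push_cast; push_cast at hmm; linarith

include hα in
lemma det : ∀ k : ℕ, cfQ α k * cfP α (k + 1) - cfQ α (k + 1) * cfP α k = (-1)^k := by
  intro k
  induction k with
  | zero => simp [q_zero, q_one, p_zero, p_one]
  | succ k ih =>
    rw [q_rec, p_rec, pow_succ]
    linear_combination (-1 : ℤ) * ih

include hα in
lemma qth (k : ℕ) :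
    (cfQ α (k + 1) : ℝ) * th α k - (cfQ α k : ℝ) * th α (k + 1) = (-1)^k := by
  have hdet := det hα (α := α) k
  have hdetR : (cfQ α k : ℝ) * (cfP α (k+1) : ℝ) - (cfQ α (k+1) : ℝ) * (cfP α k : ℝ)
      = (-1)^k := by exact_mod_cast hdet
  simp only [th]
  linear_combination hdetR

include hα h0 h1 in
lemma qid (k : ℕ) :
    (cfQ α (k + 1) : ℝ) * et α k + (cfQ α k : ℝ) * et α (k + 1) = 1 := by
  have hq := qth hα (α := α) k
  have hsq : ((-1 : ℝ)^k) * ((-1 : ℝ)^k) = 1 := by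
    rw [← pow_add, ← two_mul, pow_mul]; norm_num
  rw [et_eq hα h0 h1 k, et_eq hα h0 h1 (k+1), pow_succ]
  linear_combination ((-1 : ℝ)^k) * hq + hsq

include hα h0 h1 in
lemma et_le (k : ℕ) : (cfQ α (k + 1) : ℝ) * et α k ≤ 1 := by
  have h := qid hα h0 h1 k
  have h2 : (0 : ℝ) ≤ (cfQ α k : ℝ) * et α (k + 1) := by
    have := et_pos hα h0 h1 (k+1)
    have hq : (1 : ℝ) ≤ (cfQ α k : ℝ) := by exact_mod_cast q_pos hα k
    nlinarith
  linarith

include hα h0 h1 in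
lemma et_ge (k : ℕ) : 1 ≤ ((cfQ α k : ℝ) + (cfQ α (k + 1) : ℝ)) * et α k := by
  have h := qid hα h0 h1 k
  have hd := (et_dec hα h0 h1 k).le
  have hq : (1 : ℝ) ≤ (cfQ α k : ℝ) := by exact_mod_cast q_pos hα k
  nlinarith

lemma abs_le_abs_add {A B : ℝ} (h : 0 ≤ A * B) : |A| ≤ |A + B| := by
  rcases mul_nonneg_iff.1 h with ⟨hA, hB⟩ | ⟨hA, hB⟩
  · rw [abs_of_nonneg hA, abs_of_nonneg (by linarith)]; linarith
  · rw [abs_of_nonpos hA, abs_of_nonpos (by linarith)]; linarith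

include hα h0 h1 in
lemma best_approx (k : ℕ) (m p : ℤ) (hm : 1 ≤ m) (hmq : m < cfQ α (k + 1)) :
    et α k ≤ |(m : ℝ) * α - (p : ℝ)| := by
  set x : ℤ := (-1)^k * (m * cfP α (k + 1) - p * cfQ α (k + 1)) with hxdef
  set y : ℤ := (-1)^k * (p * cfQ α k - m * cfP α k) with hydef
  have hdet := det hα (α := α) k
  have hsq : ((-1 : ℤ)^k) * ((-1 : ℤ)^k) = 1 := by
    rw [← pow_add, ← two_mul, pow_mul]; norm_num
  have hxq : x * cfQ α k + y * cfQ α (k + 1) = m := by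
    rw [hxdef, hydef]
    linear_combination ((-1:ℤ)^k * m) * hdet + m * hsq
  have hxp : x * cfP α k + y * cfP α (k + 1) = p := by
    rw [hxdef, hydef]
    linear_combination ((-1:ℤ)^k * p) * hdet + p * hsq
  have hval : (m : ℝ) * α - (p : ℝ) = (x : ℝ) * th α k + (y : ℝ) * th α (k + 1) := by
    have hxqR : (x : ℝ) * (cfQ α k : ℝ) + (y : ℝ) * (cfQ α (k+1) : ℝ) = (m : ℝ) := by
      exact_mod_cast hxq
    have hxpR : (x : ℝ) * (cfP α k : ℝ) + (y : ℝ) * (cfP α (k+1) : ℝ) = (p : ℝ) := by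
      exact_mod_cast hxp
    simp only [th]
    linear_combination hxpR - α * hxqR
  have hqpos := q_pos hα (α := α) k
  have hqpos1 := q_pos hα (α := α) (k+1)
  have hthprod : th α k * th α (k + 1) < 0 := by
    have h1' := th_pos hα h0 h1 k
    have h2' := th_pos hα h0 h1 (k+1)
    have : 0 < ((-1:ℝ)^k * th α k) * ((-1:ℝ)^(k+1) * th α (k+1)) := mul_pos h1' h2'
    have hs : ((-1:ℝ)^k) * ((-1:ℝ)^(k+1)) = -1 := by
      rw [pow_succ, ← mul_assoc, ← pow_add, ← two_mul, pow_mul]; norm_num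
    nlinarith
  have het : et α k = |th α k| := rfl
  rcases eq_or_ne y 0 with hy | hy
  · -- m = x * q_k, x ≥ 1
    rw [hy] at hxq; simp at hxq
    have hx1 : 1 ≤ x := by
      by_contra hcon
      push_neg at hcon
      have h' := mul_nonneg (by linarith : (0:ℤ) ≤ -x) (by linarith : (0:ℤ) ≤ cfQ α k)
      nlinarith [hxq, hm]
    rw [hval, hy]
    push_cast
    rw [zero_mul, add_zero, abs_mul]
    have hx1R : (1:ℝ) ≤ |(x:ℝ)| := by
      rw [abs_of_pos (by exact_mod_cast hx1)]; exact_mod_cast hx1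
    nlinarith [abs_nonneg (th α k), hx1R, het.le, het.ge]
  · rcases eq_or_ne x 0 with hx | hx
    · exfalso
      rw [hx] at hxq; simp at hxq
      rcases lt_or_gt_of_ne hy with h' | h'
      · have h'' := mul_le_mul_of_nonneg_right (by linarith : y ≤ -1) (by linarith : (0:ℤ) ≤ cfQ α (k+1))
        linarith [hxq.le, hm, hqpos1]
      · have h'' := mul_le_mul_of_nonneg_right (by linarith : 1 ≤ y) (by linarith : (0:ℤ) ≤ cfQ α (k+1))
        linarith [hxq.ge, hmq]
    · -- x ≠ 0, y ≠ 0 : must have opposite signs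
      have hxy : x * y < 0 := by
        rcases lt_or_gt_of_ne hx with h' | h'
        · rcases lt_or_gt_of_ne hy with h'' | h'' 
          · exfalso
            have hA' := mul_le_mul_of_nonneg_right (by linarith : x ≤ -1) (by linarith : (0:ℤ) ≤ cfQ α k)
            have hB' := mul_le_mul_of_nonneg_right (by linarith : y ≤ -1) (by linarith : (0:ℤ) ≤ cfQ α (k+1))
            linarith [hm, hqpos, hqpos1]
          · exact mul_neg_of_neg_of_pos h' h''
        · rcases lt_or_gt_of_ne hy with h'' | h''
          · exact mul_neg_of_pos_of_neg h' h''
          · exfalso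
            have hA' := mul_le_mul_of_nonneg_right (by linarith : 1 ≤ x) (by linarith : (0:ℤ) ≤ cfQ α k)
            have hB' := mul_le_mul_of_nonneg_right (by linarith : 1 ≤ y) (by linarith : (0:ℤ) ≤ cfQ α (k+1))
            linarith [hmq, hqpos]
      have hAB : 0 ≤ ((x:ℝ) * th α k) * ((y:ℝ) * th α (k+1)) := by
        have hxyR : (x:ℝ) * (y:ℝ) ≤ 0 := by exact_mod_cast hxy.le
        nlinarith [hthprod, mul_nonneg (neg_nonneg.2 hxyR) (neg_nonneg.2 hthprod.le)]
      have h1' : et α k ≤ |(x:ℝ) * th α k| := by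
        rw [abs_mul]
        have hx1R : (1:ℝ) ≤ |(x:ℝ)| := by
          have h1x : 1 ≤ |x| := Int.one_le_abs hx
          have : ((1:ℤ):ℝ) ≤ (|x| : ℝ) := by exact_mod_cast h1x
          simpa [Int.cast_abs] using this
        nlinarith [abs_nonneg (th α k), hx1R, het.le, het.ge]
      calc et α k ≤ |(x:ℝ) * th α k| := h1'
        _ ≤ |(x:ℝ) * th α k + (y:ℝ) * th α (k+1)| := abs_le_abs_add hAB
        _ = |(m : ℝ) * α - (p : ℝ)| := by rw [hval]

end SturmAux

-- chunk 3: words and letters --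

noncomputable def win (α : ℝ) (i L : ℕ) : List ℕ :=
  (List.range L).map (fun j => sturmianLetter α (i + j))

lemma win_length (i L : ℕ) : (win α i L).length = L := by simp [win]

lemma win_getElem (i L j : ℕ) (hj : j < L) :
    (win α i L)[j]'(by simp [win_length]; exact hj) = sturmianLetter α (i + j) := by
  simp [win]

lemma flat_len (w : List ℕ) : ∀ N : ℕ, ((List.replicate N w).flatten).length = N * w.length := by
  intro N
  induction N with
  | zero => simp
  | succ N ih => rw [List.replicate_succ, List.flatten_cons, List.length_append, ih, Nat.succ_mul]; omega

lemma flat_rep (i q : ℕ) : ∀ N : ℕ, (List.replicate N (win α i q)).flatten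
    = (List.range (N * q)).map (fun j => sturmianLetter α (i + j % q)) := by
  intro N
  induction N with
  | zero => simp
  | succ N ih =>
    rw [List.replicate_succ, List.flatten_cons, ih]
    rw [show (N + 1) * q = q + N * q by ring, List.range_add, List.map_append, List.map_map]
    congr 1
    · apply List.map_congr_left
      intro j hj
      rw [List.mem_range] at hj
      rw [Nat.mod_eq_of_lt hj]
    · apply List.map_congr_left
      intro j hj
      simp only [Function.comp]
      rw [Nat.add_mod_left]

lemma mod_letter (i q L : ℕ) (hq : 1 ≤ q)
    (hper : ∀ p, p + q < L → sturmianLetter α (i + (p + q)) = sturmianLetter α (i + p)) :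
    ∀ j, j < L → sturmianLetter α (i + j % q) = sturmianLetter α (i + j) := by
  intro j
  induction j using Nat.strong_induction_on with
  | _ j ih =>
    intro hj
    rcases Nat.lt_or_ge j q with h | h
    · rw [Nat.mod_eq_of_lt h]
    · have hj' : j - q < j := by omega
      have h1 : sturmianLetter α (i + j) = sturmianLetter α (i + (j - q)) := by
        have := hper (j - q) (by omega)
        rw [show j - q + q = j by omega] at this
        exact this
      rw [Nat.mod_eq_sub_mod h, h1]
      exact ih (j - q) hj' (by omega)

lemma pow_getElem? (w u : List ℕ) (hu : u <+: w) (hw : 0 < w.length) :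
    ∀ (N j : ℕ), j < N * w.length + u.length →
    ((List.replicate N w).flatten ++ u)[j]? = w[j % w.length]? := by
  intro N
  induction N with
  | zero =>
    intro j hj
    simp only [List.replicate, List.flatten_nil, List.nil_append]
    have hj' : j < u.length := by simpa using hj
    have hjw : j < w.length := lt_of_lt_of_le hj' hu.length_le
    rw [Nat.mod_eq_of_lt hjw, List.getElem?_eq_getElem hj', List.getElem?_eq_getElem hjw]
    exact congrArg some (hu.getElem hj')
  | succ N ih =>
    intro j hj
    rw [List.replicate_succ, List.flatten_cons, List.append_assoc, List.getElem?_append]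
    rcases Nat.lt_or_ge j w.length with h | h
    · rw [if_pos h, Nat.mod_eq_of_lt h]
    · rw [if_neg (by omega), Nat.mod_eq_sub_mod h]
      exact ih (j - w.length) (by rw [Nat.succ_mul] at hj; omega)

-- chunk 4: letters and fract arithmetic --

lemma letter_iff (α : ℝ) (p p' : ℕ) :
    sturmianLetter α p = sturmianLetter α p' ↔
      (Int.fract (((p : ℝ) + 1) * α) < 1 - α ↔ Int.fract (((p' : ℝ) + 1) * α) < 1 - α) := by
  unfold sturmianLetter
  by_cases h1' : Int.fract (((p : ℝ) + 1) * α) < 1 - α <;>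
    by_cases h2' : Int.fract (((p' : ℝ) + 1) * α) < 1 - α <;> simp [h1', h2']

lemma fract_shift (α : ℝ) (p m : ℕ) (R : ℤ) :
    Int.fract ((((p + m : ℕ) : ℝ) + 1) * α)
      = Int.fract (Int.fract (((p : ℝ) + 1) * α) + ((m : ℝ) * α - (R : ℝ))) := by
  have h' : (((p + m : ℕ) : ℝ) + 1) * α
      = (Int.fract (((p : ℝ) + 1) * α) + ((m : ℝ) * α - (R : ℝ)))
        + ((⌊((p : ℝ) + 1) * α⌋ + R : ℤ) : ℝ) := by
    rw [← Int.self_sub_floor (((p : ℝ) + 1) * α)]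
    push_cast
    ring
  rw [h', Int.fract_add_intCast]

section RealLemmas
variable {α : ℝ}

lemma sameside_pos {z δ : ℝ} (hz0 : 0 ≤ z) (hz1 : z < 1) (hd0 : 0 < δ)
    (hS1 : ¬(1 - α - δ ≤ z ∧ z < 1 - α)) (hS2 : z < 1 - δ) :
    (z < 1 - α ↔ Int.fract (z + δ) < 1 - α) := by
  have hf : Int.fract (z + δ) = z + δ := Int.fract_eq_self.2 ⟨by linarith, by linarith⟩
  rw [hf]
  push_neg at hS1
  constructor
  · intro h
    rcases lt_or_ge z (1 - α - δ) with h' | h'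
    · linarith
    · exact absurd h (not_lt.2 (hS1 h'))
  · intro h
    linarith

lemma sameside_neg {z δ : ℝ} (hz0 : 0 ≤ z) (hz1 : z < 1) (hd0 : δ < 0)
    (hS1 : ¬(1 - α ≤ z ∧ z < 1 - α - δ)) (hS2 : -δ ≤ z) :
    (z < 1 - α ↔ Int.fract (z + δ) < 1 - α) := by
  have hf : Int.fract (z + δ) = z + δ := Int.fract_eq_self.2 ⟨by linarith, by linarith⟩
  rw [hf]
  push_neg at hS1
  constructor
  · intro h; linarith
  · intro h
    by_contra hcon
    push_neg at hcon
    have := hS1 hcon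
    linarith

lemma mismatch_pos (h0' : 0 < α) (h1' : α < 1) {z δ : ℝ} (hd0 : 0 < δ)
    (hl : max 0 (1 - α - δ) ≤ z) (hr : z < min (1 - α) (1 - δ)) :
    (z < 1 - α) ∧ ¬(Int.fract (z + δ) < 1 - α) := by
  have hl1 : (0:ℝ) ≤ z := le_trans (le_max_left _ _) hl
  have hl2 : 1 - α - δ ≤ z := le_trans (le_max_right _ _) hl
  have hr1 : z < 1 - α := lt_of_lt_of_le hr (min_le_left _ _)
  have hr2 : z < 1 - δ := lt_of_lt_of_le hr (min_le_right _ _)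
  have hf : Int.fract (z + δ) = z + δ := Int.fract_eq_self.2 ⟨by linarith, by linarith⟩
  exact ⟨hr1, by rw [hf]; push_neg; linarith⟩

lemma mismatch_neg (h0' : 0 < α) (h1' : α < 1) {z δ : ℝ} (hd0 : δ < 0)
    (hl : max (1 - α) (-δ) ≤ z) (hr : z < min 1 (1 - α - δ)) :
    ¬(z < 1 - α) ∧ (Int.fract (z + δ) < 1 - α) := by
  have hl1 : 1 - α ≤ z := le_trans (le_max_left _ _) hl
  have hl2 : -δ ≤ z := le_trans (le_max_right _ _) hl
  have hr1 : z < 1 := lt_of_lt_of_le hr (min_le_left _ _)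
  have hr2 : z < 1 - α - δ := lt_of_lt_of_le hr (min_le_right _ _)
  have hf : Int.fract (z + δ) = z + δ := Int.fract_eq_self.2 ⟨by linarith, by linarith⟩
  exact ⟨by push_neg; linarith, by rw [hf]; linarith⟩

lemma min_half (h0' : 0 < α) (h1' : α < 1) : min α (1 - α) ≤ 1 / 2 := by
  rcases le_total α (1 - α) with h | h
  · calc min α (1-α) ≤ α := min_le_left _ _
      _ ≤ 1/2 := by linarith
  · calc min α (1-α) ≤ 1 - α := min_le_right _ _
      _ ≤ 1/2 := by linarith

lemma arc_len_pos (h0' : 0 < α) (h1' : α < 1) {ε : ℝ} (he0 : 0 < ε) (he2 : ε ≤ 1 / 2) :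
    min ε (min α (1 - α)) ≤ min (1 - α) (1 - ε) - max 0 (1 - α - ε) := by
  have hm := min_half h0' h1'
  rcases max_cases (0:ℝ) (1 - α - ε) with ⟨hy, hy'⟩ | ⟨hy, hy'⟩ <;>
    rcases min_cases (1 - α) (1 - ε) with ⟨hR, hR'⟩ | ⟨hR, hR'⟩ <;> rw [hy, hR]
  · exact le_trans (min_le_right _ _) (le_trans (min_le_right _ _) (by linarith))
  · exact le_trans (min_le_right _ _) (by linarith)
  · exact le_trans (min_le_left _ _) (by linarith)
  · exact le_trans (min_le_right _ _) (le_trans (min_le_left _ _) (by linarith))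

lemma arc_len_neg (h0' : 0 < α) (h1' : α < 1) {ε : ℝ} (he0 : 0 < ε) (he2 : ε ≤ 1 / 2) :
    min ε (min α (1 - α)) ≤ min 1 (1 - α + ε) - max (1 - α) ε := by
  have hm := min_half h0' h1'
  rcases max_cases (1 - α) ε with ⟨hy, hy'⟩ | ⟨hy, hy'⟩ <;>
    rcases min_cases (1:ℝ) (1 - α + ε) with ⟨hR, hR'⟩ | ⟨hR, hR'⟩ <;> rw [hy, hR]
  · exact le_trans (min_le_right _ _) (le_trans (min_le_left _ _) (by linarith))
  · exact le_trans (min_le_left _ _) (by linarith)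
  · exact le_trans (min_le_right _ _) (by linarith)
  · exact le_trans (min_le_right _ _) (le_trans (min_le_right _ _) (by linarith))

end RealLemmas

lemma exists_flip (P : ℕ → Prop) : ∀ N : ℕ, P 0 → ¬ P N → ∃ i, i < N ∧ P i ∧ ¬ P (i + 1) := by
  intro N h0' hN
  induction N with
  | zero => exact absurd h0' hN
  | succ N ih =>
    by_cases h : P N
    · exact ⟨N, Nat.lt_succ_self N, h, hN⟩
    · obtain ⟨i, hi, hx1, hx2⟩ := ih h
      exact ⟨i, by omega, hx1, hx2⟩

-- chunk 5: hitting lemma --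

namespace SturmAux

noncomputable def nq (α : ℝ) (k : ℕ) : ℕ := (cfQ α k).toNat

variable {α : ℝ} (hα : Irrational α) (h0 : 0 < α) (h1 : α < 1)

include hα in
lemma nq_cast (k : ℕ) : (nq α k : ℤ) = cfQ α k :=
  Int.toNat_of_nonneg (by linarith [q_pos hα (α := α) k])

include hα in
lemma nq_pos (k : ℕ) : 1 ≤ nq α k := by
  have h := q_pos hα (α := α) k
  have := nq_cast hα (α := α) k
  omega

include hα in
lemma nq_mono (k : ℕ) : nq α k ≤ nq α (k + 1) := by
  have h := q_mono hα (α := α) k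
  have h1' := nq_cast hα (α := α) k
  have h2' := nq_cast hα (α := α) (k + 1)
  omega

include hα h0 h1 in
lemma hitting (s : ℕ) (x y : ℝ) :
    ∃ t : ℕ, t < nq α (s + 1) ∧ Int.fract (x + t * α - y) < et α s + et α (s + 1) := by
  have hQ1pos : 0 < nq α (s + 1) := nq_pos hα (s + 1)
  by_cases hg : 1 ≤ et α s + et α (s + 1)
  · exact ⟨0, hQ1pos, lt_of_lt_of_le (Int.fract_lt_one _) hg⟩
  push_neg at hg
  have he0pos : 0 < et α s := et_pos hα h0 h1 s
  have he1pos : 0 < et α (s + 1) := et_pos hα h0 h1 (s + 1)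
  set e0 := et α s with he0def
  set e1 := et α (s + 1) with he1def
  set Q0 := nq α s with hQ0def
  set Q1 := nq α (s + 1) with hQ1def
  have hQ01 : Q0 ≤ Q1 := nq_mono hα s
  set wf : ℕ → ℕ := fun i => (i * Q0) / Q1 with hwf
  set tf : ℕ → ℕ := fun i => (i * Q0) % Q1 with htf
  set W : ℕ → ℝ := fun i =>
    Int.fract (x - y) + (i : ℝ) * th α s - (wf i : ℝ) * th α (s + 1) with hW
  have hq0R : ((Q0 : ℕ) : ℝ) = ((cfQ α s : ℤ) : ℝ) := by exact_mod_cast nq_cast hα s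
  have hq1R : ((Q1 : ℕ) : ℝ) = ((cfQ α (s+1) : ℤ) : ℝ) := by exact_mod_cast nq_cast hα (s+1)
  -- congruence mod 1
  have hcong : ∀ i, Int.fract (x + (tf i : ℝ) * α - y) = Int.fract (W i) := by
    intro i
    have hdm : (wf i) * Q1 + (tf i) = i * Q0 := Nat.div_add_mod' (i * Q0) Q1
    refine Int.fract_eq_fract.2 ⟨⌊x - y⌋ + i * cfP α s - wf i * cfP α (s + 1), ?_⟩
    have hdmR : ((wf i : ℝ)) * ((cfQ α (s+1) : ℤ) : ℝ) + (tf i : ℝ)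
        = (i : ℝ) * ((cfQ α s : ℤ) : ℝ) := by
      rw [← hq0R, ← hq1R]; exact_mod_cast hdm
    simp only [hW, th]
    rw [← Int.self_sub_floor (x - y)]
    push_cast
    linear_combination α * hdmR
  -- steps
  have hw01 : ∀ i, wf (i + 1) = wf i ∨ wf (i + 1) = wf i + 1 := by
    intro i
    have hle : wf i ≤ wf (i + 1) :=
      Nat.div_le_div_right (Nat.mul_le_mul_right Q0 (Nat.le_succ i))
    have hge : wf (i + 1) ≤ wf i + 1 := by
      have h' : (i + 1) * Q0 ≤ i * Q0 + Q1 := by rw [Nat.succ_mul]; omega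
      calc wf (i + 1) = ((i+1) * Q0) / Q1 := rfl
        _ ≤ (i * Q0 + Q1) / Q1 := Nat.div_le_div_right h'
        _ = wf i + 1 := Nat.add_div_right _ hQ1pos
    omega
  set σ : ℝ := (-1 : ℝ)^s with hσ
  have hsig0 : σ * th α s = e0 := by
    rw [he0def, et_eq hα h0 h1 s, hσ]
  have hsig1 : σ * th α (s + 1) = -e1 := by
    have h' := et_eq hα h0 h1 (s + 1)
    rw [he1def, h', pow_succ, hσ]
    ring
  have hstep : ∀ i, e0 ≤ σ * (W (i + 1) - W i) ∧ σ * (W (i + 1) - W i) ≤ e0 + e1 := by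
    intro i
    rcases hw01 i with h | h
    · have hd : W (i + 1) - W i = th α s := by simp only [hW, h]; push_cast; ring
      rw [hd, hsig0]
      constructor <;> linarith
    · have hd : W (i + 1) - W i = th α s - th α (s + 1) := by
        simp only [hW, h]; push_cast; ring
      rw [hd, mul_sub, hsig0, hsig1]
      constructor <;> linarith
  have hend : W Q1 = W 0 + σ := by
    have hwQ : wf Q1 = Q0 := by
      simp only [hwf]
      rw [Nat.mul_comm]
      exact Nat.mul_div_cancel Q0 hQ1pos
    have hw0 : wf 0 = 0 := by simp [hwf]
    have hqt := qth hα (α := α) s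
    simp only [hW, hwQ, hw0]
    push_cast [hq0R, hq1R]
    rw [hσ]
    linear_combination hqt
  have hW0lb : 0 ≤ W 0 := by
    have hw0 : wf 0 = 0 := by simp [hwf]
    simp only [hW, hw0]
    push_cast
    simpa using Int.fract_nonneg (x - y)
  have hW0ub : W 0 < 1 := by
    have hw0 : wf 0 = 0 := by simp [hwf]
    simp only [hW, hw0]
    push_cast
    simpa using Int.fract_lt_one (x - y)
  rcases Nat.even_or_odd s with hpar | hpar
  · -- σ = 1, increasing walk
    have hσ1 : σ = 1 := by rw [hσ]; exact hpar.neg_one_pow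
    rw [hσ1] at hstep hend
    simp only [one_mul] at hstep
    obtain ⟨i, hiN, hPi, hPi1⟩ := exists_flip (fun i => W i < 1) Q1 hW0ub
      (by show ¬(W Q1 < 1); rw [hend]; push_neg; linarith)
    replace hPi : W i < 1 := hPi
    replace hPi1 : ¬(W (i + 1) < 1) := hPi1
    push_neg at hPi1
    have hub : W (i + 1) < 1 + (e0 + e1) := by
      have := (hstep i).2; linarith
    refine ⟨tf (i + 1), Nat.mod_lt _ hQ1pos, ?_⟩
    rw [hcong (i + 1)]
    have hfr : Int.fract (W (i + 1)) = W (i + 1) - 1 := by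
      have h1'' : Int.fract (W (i+1)) = Int.fract (W (i+1) - (1:ℤ)) :=
        (Int.fract_sub_intCast (W (i+1)) 1).symm
      rw [h1'']
      rw [Int.fract_eq_self.2 ⟨by push_cast; linarith, by push_cast; linarith⟩]
      push_cast
      ring
    rw [hfr]
    linarith
  · -- σ = -1, decreasing walk
    have hσ1 : σ = -1 := by rw [hσ]; exact hpar.neg_one_pow
    rw [hσ1] at hstep hend
    by_cases hW0 : W 0 < e0 + e1
    · refine ⟨tf 0, Nat.mod_lt _ hQ1pos, ?_⟩
      rw [hcong 0]
      rw [Int.fract_eq_self.2 ⟨hW0lb, hW0ub⟩]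
      exact hW0
    · push_neg at hW0
      obtain ⟨i, hiN, hPi, hPi1⟩ := exists_flip (fun i => e0 + e1 ≤ W i) Q1 hW0
        (by show ¬(e0 + e1 ≤ W Q1); rw [hend]; push_neg; linarith)
      replace hPi : e0 + e1 ≤ W i := hPi
      replace hPi1 : ¬(e0 + e1 ≤ W (i + 1)) := hPi1
      push_neg at hPi1
      have hlb : 0 ≤ W (i + 1) := by
        have := (hstep i).2; linarith
      refine ⟨tf (i + 1), Nat.mod_lt _ hQ1pos, ?_⟩
      rw [hcong (i + 1)]
      rw [Int.fract_eq_self.2 ⟨hlb, by linarith⟩]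
      exact hPi1

end SturmAux

-- chunk 6: consequences of best approximation; period lemma --

namespace SturmAux

variable {α : ℝ} (hα : Irrational α) (h0 : 0 < α) (h1 : α < 1)

lemma win_inLang (α : ℝ) (i L : ℕ) : InLang α (win α i L) := by
  refine ⟨i, ?_⟩
  rw [win_length]
  rfl

include hα in
lemma irr_no_int {n : ℤ} (hn : n ≠ 0) (z : ℤ) : (n : ℝ) * α ≠ (z : ℝ) := by
  intro h
  apply hα
  refine ⟨(z : ℚ) / (n : ℚ), ?_⟩
  have hnR : (n : ℝ) ≠ 0 := Int.cast_ne_zero.2 hn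
  push_cast
  rw [div_eq_iff hnR]
  linear_combination -h

include hα h0 h1 in
lemma et_lt_one (k : ℕ) : et α k < 1 := by
  have h' : et α k ≤ et α 0 := et_le_of_le hα h0 h1 (Nat.zero_le k)
  have h0' : et α 0 = α := by rw [et, th_zero, abs_of_pos h0]
  linarith

include hα h0 h1 in
lemma fract_lb (k : ℕ) (m : ℤ) (hm : 1 ≤ m) (hmq : m < cfQ α (k + 1)) :
    et α k ≤ Int.fract ((m : ℝ) * α) := by
  have hb := best_approx hα h0 h1 k m ⌊(m : ℝ) * α⌋ hm hmq
  rw [Int.self_sub_floor, abs_of_nonneg (Int.fract_nonneg _)] at hb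
  exact hb

include hα h0 h1 in
lemma fract_ub (k : ℕ) (m : ℤ) (hm : 1 ≤ m) (hmq : m < cfQ α (k + 1)) :
    Int.fract ((m : ℝ) * α) ≤ 1 - et α k := by
  have hb := best_approx hα h0 h1 k m (⌊(m : ℝ) * α⌋ + 1) hm hmq
  have hfr : (m : ℝ) * α - ((⌊(m : ℝ) * α⌋ + 1 : ℤ) : ℝ) = Int.fract ((m : ℝ) * α) - 1 := by
    rw [← Int.self_sub_floor ((m : ℝ) * α)]
    push_cast
    ring
  rw [hfr, abs_of_nonpos (by linarith [Int.fract_lt_one ((m : ℝ) * α)])] at hb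
  linarith

include hα h0 h1 in
lemma fract_ub_strict (k : ℕ) (m : ℤ) (hm : 1 ≤ m) (hmq : m < cfQ α (k + 1))
    (hth : 0 < th α k) : Int.fract ((m : ℝ) * α) < 1 - et α k := by
  rcases lt_or_eq_of_le (fract_ub hα h0 h1 k m hm hmq) with h | h
  · exact h
  · exfalso
    have het : et α k = th α k := abs_of_pos hth
    have hqk := q_pos hα (α := α) k
    have : ((m + cfQ α k : ℤ) : ℝ) * α = ((⌊(m : ℝ) * α⌋ + 1 + cfP α k : ℤ) : ℝ) := by
      have hfr : Int.fract ((m : ℝ) * α) = (m : ℝ) * α - ⌊(m : ℝ) * α⌋ :=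
        (Int.self_sub_floor _).symm
      rw [hfr, het] at h
      simp only [th] at h
      push_cast
      linear_combination h
    exact irr_no_int hα (by omega) _ this

include hα h0 h1 in
lemma q_succ_ge (k : ℕ) : cfA α (k + 1) * cfQ α k ≤ cfQ α (k + 1) := by
  cases k with
  | zero => rw [q_zero, q_one, mul_one]
  | succ j => rw [q_rec]; linarith [q_pos hα (α := α) j]

include hα h0 h1 in
lemma key_period (k : ℕ) (p : ℕ) (hp : (p : ℤ) + 2 < cfQ α (k + 1)) :
    sturmianLetter α (p + nq α k) = sturmianLetter α p := by
  have hq1 : ((nq α k : ℕ) : ℤ) = cfQ α k := nq_cast hα k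
  set z := Int.fract (((p : ℝ) + 1) * α) with hz
  have hz0 : 0 ≤ z := Int.fract_nonneg _
  have hz1 : z < 1 := Int.fract_lt_one _
  have hth_ne := th_ne hα h0 h1 k
  have hetlt := et_lt_one hα h0 h1 k
  have hetpos := et_pos hα h0 h1 k
  -- fract((p + q + 1) α) = fract (z + th α k)
  have hshift : Int.fract ((((p + nq α k : ℕ) : ℝ) + 1) * α) = Int.fract (z + th α k) := by
    have h' := fract_shift α p (nq α k) (cfP α k)
    rw [h']
    congr 2
    rw [th]
    congr 1
    congr 1
    exact_mod_cast hq1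
  -- fract((p+2)α) = fract (z + α)
  have hshift2 : Int.fract (((p : ℝ) + 2) * α) = Int.fract (z + α) := by
    have h' := fract_shift α p 1 0
    push_cast at h'
    rw [show ((p : ℝ) + 2) * α = ((p : ℝ) + 1 + 1) * α by ring]
    rw [h']
    congr 1
    ring
  have hm1 : Int.fract (((p : ℝ) + 1) * α) = Int.fract (((p + 1 : ℤ) : ℝ) * α) := by
    push_cast; ring_nf
  have hm2 : Int.fract (((p : ℝ) + 2) * α) = Int.fract (((p + 2 : ℤ) : ℝ) * α) := by
    push_cast; ring_nf
  rw [letter_iff, hshift]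
  rcases lt_or_gt_of_ne hth_ne with hth | hth
  · -- th α k < 0, δ = th, -δ = et
    have hdelta : -th α k = et α k := by rw [et, abs_of_neg hth]
    apply Iff.symm
    apply sameside_neg hz0 hz1 hth
    · -- ¬ (1 - α ≤ z ∧ z < 1 - α - th)
      rintro ⟨hA, hB⟩
      -- fract((p+2)α) = z + α - 1 ∈ [0, et)
      have hza : Int.fract (z + α) = z + α - 1 := by
        have : Int.fract (z + α) = Int.fract (z + α - (1 : ℤ)) := (Int.fract_sub_intCast _ _).symm
        rw [this]
        push_cast
        apply Int.fract_eq_self.2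
        exact ⟨by linarith, by linarith⟩
      have hlt : Int.fract (((p + 2 : ℤ) : ℝ) * α) < et α k := by
        rw [← hm2, hshift2, hza]; linarith
      have := fract_lb hα h0 h1 k (p + 2) (by omega) hp
      linarith
    · -- -δ ≤ z
      rw [hdelta, hz, hm1]
      exact fract_lb hα h0 h1 k (p + 1) (by omega) (by omega)
  · -- th α k > 0, δ = th = et
    have hdelta' : et α k = th α k := abs_of_pos hth
    apply Iff.symm
    apply sameside_pos hz0 hz1 hth
    · -- ¬ (1 - α - δ ≤ z ∧ z < 1 - α)
      rintro ⟨hA, hB⟩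
      have hza : Int.fract (z + α) = z + α := by
        apply Int.fract_eq_self.2
        exact ⟨by linarith, by linarith⟩
      have hge : 1 - et α k ≤ Int.fract (((p + 2 : ℤ) : ℝ) * α) := by
        rw [← hm2, hshift2, hza]; linarith [hdelta']
      have := fract_ub_strict hα h0 h1 k (p + 2) (by omega) hp hth
      linarith
    · -- z < 1 - δ
      have hlt := fract_ub_strict hα h0 h1 k (p + 1) (by omega) (by omega) hth
      rw [← hdelta', hz, hm1]
      exact hlt

end SturmAux

-- chunk 7: direction A --

namespace SturmAux

variable {α : ℝ} (hα : Irrational α) (h0 : 0 < α) (h1 : α < 1)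

include hα h0 h1 in
lemma dirA (B : ℚ)
    (hB : ∀ w : List ℕ, w ≠ [] → InLang α w → ∀ r : ℚ, FracPowInLang α w r → r ≤ B) :
    ∀ k : ℕ, 1 ≤ k → cfA α k ≤ ⌈B⌉ + 1 := by
  have hB0 : (0 : ℚ) ≤ B := by
    have h' := hB (win α 0 1) (by
        intro hcon
        have := win_length (α := α) 0 1
        rw [hcon] at this
        simp at this)
      (win_inLang α 0 1) 0
      ⟨0, [], List.nil_prefix, by simp, ⟨0, by simp⟩⟩
    linarith
  intro k hk
  obtain ⟨k', rfl⟩ : ∃ k'', k = k'' + 1 := ⟨k - 1, by omega⟩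
  set q := nq α k' with hqdef
  have hq1 : 1 ≤ q := nq_pos hα k'
  have hqc : ((q : ℕ) : ℤ) = cfQ α k' := nq_cast hα k'
  have hA1 : 1 ≤ cfA α (k' + 1) := cfA_pos hα (by omega)
  set N := (cfA α (k' + 1) - 1).toNat with hNdef
  have hNc : (N : ℤ) = cfA α (k' + 1) - 1 := Int.toNat_of_nonneg (by omega)
  rcases Nat.eq_zero_or_pos N with hN0 | hNpos
  · -- a = 1 ≤ ⌈B⌉ + 1
    have : cfA α (k' + 1) = 1 := by omega
    rw [this]
    have : (0 : ℤ) ≤ ⌈B⌉ := Int.ceil_nonneg hB0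
    omega
  · -- period of length q over [0, N*q)
    have hper : ∀ p, p + q < N * q →
        sturmianLetter α (0 + (p + q)) = sturmianLetter α (0 + p) := by
      intro p hpq
      simp only [zero_add]
      apply key_period hα h0 h1 k' p
      -- p + 2 < q_{k'+1}
      have hpq' : (p : ℤ) + (q : ℤ) < (N : ℤ) * (q : ℤ) := by exact_mod_cast hpq
      have hqs := q_succ_ge hα h0 h1 k'
      have hqZ : (1 : ℤ) ≤ (q : ℤ) := by exact_mod_cast hq1
      rw [hNc] at hpq'
      rw [← hqc] at hqs
      nlinarith [hpq', hqs, hqZ]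
    set w := win α 0 q with hwdef
    have hw_ne : w ≠ [] := by
      intro hcon
      have := win_length (α := α) 0 q
      rw [hwdef] at hcon
      rw [hcon] at this
      simp at this
      omega
    have hflat : (List.replicate N w).flatten = win α 0 (N * q) := by
      rw [hwdef, flat_rep]
      apply List.map_congr_left
      intro j hj
      exact mod_letter 0 q (N * q) hq1 hper j (List.mem_range.1 hj)
    have hfp : FracPowInLang α w (N : ℚ) := by
      refine ⟨N, [], List.nil_prefix, by simp, ?_⟩
      rw [List.append_nil, hflat]
      exact win_inLang α 0 (N * q)
    have hle := hB w hw_ne (hwdef ▸ win_inLang α 0 q) (N : ℚ) hfp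
    have hNle : (N : ℤ) ≤ ⌈B⌉ := by
      have h' : (N : ℚ) ≤ (⌈B⌉ : ℚ) := le_trans hle (Int.le_ceil B)
      exact_mod_cast h'
    omega

end SturmAux

-- chunk 8: direction B --

namespace SturmAux

variable {α : ℝ} (hα : Irrational α) (h0 : 0 < α) (h1 : α < 1)

lemma fract_sub_fract (a y : ℝ) : Int.fract (a - y) = Int.fract (Int.fract a - y) := by
  have h' : a - y = (Int.fract a - y) + (⌊a⌋ : ℤ) := by
    rw [← Int.self_sub_floor a]; ring
  rw [h', Int.fract_add_intCast]

include hα in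
lemma q_growth (M : ℤ) (hM : ∀ k : ℕ, 1 ≤ k → cfA α k ≤ M) (k : ℕ) :
    cfQ α (k + 1) ≤ (M + 2) * cfQ α k := by
  have hM1 : 1 ≤ M := le_trans (cfA_pos hα (le_refl 1)) (hM 1 (le_refl 1))
  cases k with
  | zero =>
    rw [q_zero, q_one, mul_one]
    linarith [hM 1 (le_refl 1)]
  | succ j =>
    rw [q_rec]
    have ha := hM (j + 2) (by omega)
    have hq := q_pos hα (α := α) (j + 1)
    have hmono := q_mono hα (α := α) j
    have := mul_le_mul_of_nonneg_right ha (by linarith : (0:ℤ) ≤ cfQ α (j + 1))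
    have hqj := q_pos hα (α := α) j
    nlinarith

include hα h0 h1 in
lemma et_le_inv (n : ℕ) : ((n : ℝ) + 1) * et α n ≤ 1 := by
  have h' := et_le hα h0 h1 n
  have hq : ((n : ℝ) + 1) ≤ ((cfQ α (n+1) : ℤ) : ℝ) := by
    have := q_ge hα (α := α) (n + 1)
    push_cast
    exact_mod_cast this
  nlinarith [et_pos hα h0 h1 n]

set_option maxHeartbeats 1000000 in
include hα h0 h1 in
lemma dirB (M : ℤ) (hM : ∀ k : ℕ, 1 ≤ k → cfA α k ≤ M) :
    ∃ B : ℚ, ∀ w : List ℕ, w ≠ [] → InLang α w → ∀ r : ℚ, FracPowInLang α w r → r ≤ B := by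
  have hM1 : 1 ≤ M := le_trans (cfA_pos hα (le_refl 1)) (hM 1 (le_refl 1))
  set α₀ : ℝ := min α (1 - α) with hα₀
  have hα₀pos : 0 < α₀ := lt_min h0 (by linarith)
  have hα₀le : α₀ ≤ 1 := le_trans (min_le_left _ _) h1.le
  set c : ℝ := min (1 / ((M : ℝ) + 3)) α₀ with hc
  have hcpos : 0 < c := lt_min (by positivity) hα₀pos
  have hcle : c ≤ 1 := le_trans (min_le_right _ _) hα₀le
  have hM1R : (1 : ℝ) ≤ (M : ℝ) := by exact_mod_cast hM1
  set R : ℝ := (3 * (M : ℝ) + 4) / c + 4 with hR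
  have hRnum : (0 : ℝ) < 3 * (M : ℝ) + 4 := by linarith
  have hRge : 4 ≤ R := by
    rw [hR]
    have : 0 < (3 * (M : ℝ) + 4) / c := div_pos hRnum hcpos
    linarith
  obtain ⟨B, hBgt⟩ := exists_rat_gt R
  refine ⟨B, ?_⟩
  intro w hw hwL r hr
  obtain ⟨N, u, hu, hreq, hpow⟩ := hr
  set m := w.length with hm
  have hm1 : 1 ≤ m := by
    rw [hm]
    exact List.length_pos_iff.2 hw
  have hum : u.length ≤ m := hu.length_le
  have hrle : r ≤ (N : ℚ) + 1 := by
    rw [hreq]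
    have hdiv : (u.length : ℚ) / (m : ℚ) ≤ 1 := by
      rw [div_le_one (by exact_mod_cast hm1 : (0:ℚ) < (m:ℚ))]
      exact_mod_cast hum
    linarith
  -- it suffices to show (N : ℝ) + 1 < R
  suffices hNR : (N : ℝ) + 1 < R by
    have hq : ((N : ℚ) + 1 : ℚ) < B := by
      have : ((N : ℝ)) + 1 < (B : ℝ) := lt_trans hNR hBgt
      exact_mod_cast this
    linarith
  rcases Nat.lt_or_ge N 2 with hN2 | hN2
  · have : (N : ℝ) ≤ 1 := by exact_mod_cast Nat.lt_succ_iff.1 hN2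
    linarith
  -- main case N ≥ 2
  obtain ⟨i, hv⟩ := hpow
  have hvlen : ((List.replicate N w).flatten ++ u).length = N * m + u.length := by
    rw [List.length_append, flat_len]
  have hm0 : 0 < w.length := hm1
  -- each letter of the window is an entry of w
  have hvj : ∀ j, j < N * m + u.length →
      sturmianLetter α (i + j) = w[j % m]'(Nat.mod_lt j hm0) := by
    intro j hj
    have h1' := pow_getElem? w u hu hm0 N j hj
    rw [hv] at h1'
    rw [List.getElem?_map, List.getElem?_range (by rw [hvlen]; exact hj),
      List.getElem?_eq_getElem (Nat.mod_lt j hm0)] at h1'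
    simpa using h1'
  set T := (N - 1) * m + u.length with hT
  have hTm : ∀ j, j < T → sturmianLetter α (i + j) = sturmianLetter α (i + (j + m)) := by
    intro j hj
    have hj1 : j < N * m + u.length := by
      have : (N - 1) * m ≤ N * m := Nat.mul_le_mul_right m (by omega)
      omega
    have hj2 : j + m < N * m + u.length := by
      have h' : (N - 1) * m + m = N * m := by
        obtain ⟨d, rfl⟩ := Nat.exists_eq_add_of_le (show 1 ≤ N by omega)
        rw [Nat.add_sub_cancel_left]
        ring
      omega
    rw [hvj j hj1, hvj (j + m) hj2]
    congr 1
    exact (Nat.add_mod_right j m).symm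
  -- the rotation parameters
  set δ : ℝ := (m : ℝ) * α - (round ((m : ℝ) * α) : ℤ) with hδ
  have hδne : δ ≠ 0 := by
    intro hcon
    apply irr_no_int hα (n := (m : ℤ)) (by exact_mod_cast Nat.one_le_iff_ne_zero.1 hm1)
      (round ((m : ℝ) * α))
    push_cast
    rw [hδ] at hcon
    linarith [hcon]
  set ε : ℝ := |δ| with hε
  have hεpos : 0 < ε := abs_pos.2 hδne
  have hεhalf : ε ≤ 1 / 2 := by rw [hε, hδ]; exact abs_sub_round _
  -- find k with q_k ≤ m < q_{k+1}
  have hex : ∃ j : ℕ, (m : ℤ) < cfQ α j := by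
    refine ⟨m + 1, ?_⟩
    have hge := q_ge hα (α := α) (m + 1)
    push_cast at hge
    omega
  have hj₀spec : (m : ℤ) < cfQ α (Nat.find hex) := Nat.find_spec hex
  have hj₀pos : 1 ≤ Nat.find hex := by
    rcases Nat.eq_zero_or_pos (Nat.find hex) with h' | h'
    · exfalso
      rw [h', q_zero] at hj₀spec
      omega
    · exact h'
  obtain ⟨k, hkeq⟩ : ∃ k, Nat.find hex = k + 1 := ⟨Nat.find hex - 1, by omega⟩
  have hk1 : cfQ α k ≤ (m : ℤ) := not_lt.1 (Nat.find_min hex (by omega))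
  have hk2 : (m : ℤ) < cfQ α (k + 1) := hkeq ▸ hj₀spec
  -- ε is at least et k
  have hεlb : et α k ≤ ε := by
    have hb := best_approx hα h0 h1 k (m : ℤ) (round ((m : ℝ) * α))
      (by exact_mod_cast hm1) hk2
    have hcast : ((m : ℤ) : ℝ) = (m : ℝ) := by push_cast; ring
    rw [hcast] at hb
    rw [hε, hδ]
    exact hb
  -- m * ε ≥ 1/(M+3)
  have hmε : 1 / ((M : ℝ) + 3) ≤ (m : ℝ) * ε := by
    have hge := et_ge hα h0 h1 k
    have hgrow := q_growth hα M hM k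
    have hqk : (1 : ℤ) ≤ cfQ α k := q_pos hα k
    have hsum : ((cfQ α k : ℝ) + (cfQ α (k+1) : ℝ)) ≤ ((M : ℝ) + 3) * (m : ℝ) := by
      have h1'' : (cfQ α k : ℝ) ≤ (m : ℝ) := by exact_mod_cast hk1
      have h2'' : (cfQ α (k+1) : ℝ) ≤ ((M : ℝ) + 2) * (cfQ α k : ℝ) := by exact_mod_cast hgrow
      have h3'' : (0:ℝ) < (M:ℝ) + 2 := by positivity
      nlinarith [h1'', h2'', (by exact_mod_cast hqk : (1:ℝ) ≤ (cfQ α k : ℝ))]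
    have hetp := et_pos hα h0 h1 k
    have hqsum : (0:ℝ) < (cfQ α k : ℝ) + (cfQ α (k+1) : ℝ) := by
      have := q_pos hα (α := α) (k+1)
      have : (1:ℝ) ≤ (cfQ α (k+1) : ℝ) := by exact_mod_cast this
      have : (1:ℝ) ≤ (cfQ α k : ℝ) := by exact_mod_cast hqk
      linarith
    rw [div_le_iff₀ (by positivity)]
    have hMm : (0:ℝ) ≤ ((M : ℝ) + 3) * (m : ℝ) := by positivity
    calc (1 : ℝ) ≤ ((cfQ α k : ℝ) + (cfQ α (k+1) : ℝ)) * et α k := hge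
      _ ≤ (((M : ℝ) + 3) * (m : ℝ)) * et α k :=
          mul_le_mul_of_nonneg_right hsum hetp.le
      _ ≤ (((M : ℝ) + 3) * (m : ℝ)) * ε := mul_le_mul_of_nonneg_left hεlb hMm
      _ = (m : ℝ) * ε * ((M : ℝ) + 3) := by ring
  classical
  -- the avoided arc
  set ℓ₀ : ℝ := min ε α₀ with hℓ₀
  have hℓ₀pos : 0 < ℓ₀ := lt_min hεpos hα₀pos
  have hℓ₀ε : ℓ₀ ≤ ε := min_le_left _ _
  obtain ⟨y, yR, hy0, hyR1, hlen, hmem⟩ :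
      ∃ y yR : ℝ, 0 ≤ y ∧ yR ≤ 1 ∧ ℓ₀ ≤ yR - y ∧
        ∀ z : ℝ, 0 ≤ z → z < 1 → y ≤ z → z < yR →
          ¬ ((z < 1 - α) ↔ (Int.fract (z + δ) < 1 - α)) := by
    rcases lt_or_gt_of_ne hδne with hneg | hpos
    · -- δ < 0, ε = -δ
      have habs : ε = -δ := by rw [hε, abs_of_neg hneg]
      refine ⟨max (1 - α) (-δ), min 1 (1 - α - δ), ?_, min_le_left _ _, ?_, ?_⟩
      · exact le_trans (by linarith) (le_max_left _ _)
      · have hthis := arc_len_neg h0 h1 (ε := ε) hεpos hεhalf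
        rw [habs] at hthis
        rw [hℓ₀, habs, show (1 - α - δ) = (1 - α + -δ) by ring]
        exact hthis
      · intro z hz0 hz1 hzy hzR hiff
        have hmis := mismatch_neg h0 h1 hneg hzy hzR
        exact hmis.1 (hiff.2 hmis.2)
    · -- δ > 0, ε = δ
      have habs : ε = δ := by rw [hε, abs_of_pos hpos]
      refine ⟨max 0 (1 - α - δ), min (1 - α) (1 - δ), le_max_left _ _, ?_, ?_, ?_⟩
      · exact le_trans (min_le_left _ _) (by linarith)
      · have hthis := arc_len_pos h0 h1 (ε := ε) hεpos hεhalf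
        rw [habs] at hthis
        rw [hℓ₀, habs]
        exact hthis
      · intro z hz0 hz1 hzy hzR hiff
        have hmis := mismatch_pos h0 h1 hpos hzy hzR
        exact hmis.2 (hiff.1 hmis.1)
  -- avoidance of the arc along the orbit
  set zf : ℕ → ℝ := fun j => Int.fract ((((i + j : ℕ) : ℝ) + 1) * α) with hzf
  have havoid : ∀ j, j < T → ¬ (y ≤ zf j ∧ zf j < yR) := by
    intro j hj hcon
    have hletter := hTm j hj
    have hiff := (letter_iff α (i + j) (i + (j + m))).1 hletter
    have hsh : Int.fract ((((i + (j + m) : ℕ) : ℝ) + 1) * α) = Int.fract (zf j + δ) := by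
      have hfs := fract_shift α (i + j) m (round ((m : ℝ) * α))
      rw [show i + (j + m) = (i + j) + m by omega]
      exact hfs
    rw [hsh] at hiff
    exact hmem (zf j) (Int.fract_nonneg _) (Int.fract_lt_one _) hcon.1 hcon.2 hiff
  -- minimal s with small two-step gap
  have hPex : ∃ n, et α n + et α (n + 1) ≤ ℓ₀ := by
    obtain ⟨n, hn⟩ := exists_nat_gt (2 / ℓ₀)
    refine ⟨n, ?_⟩
    have h1n := et_le_inv hα h0 h1 n
    have hd := (et_dec hα h0 h1 n).le
    have hnpos : (0:ℝ) < (n:ℝ) := lt_trans (div_pos two_pos hℓ₀pos) hn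
    have hnl : 2 < (n:ℝ) * ℓ₀ := by rw [← div_lt_iff₀ hℓ₀pos]; exact hn
    nlinarith [et_pos hα h0 h1 n, et_pos hα h0 h1 (n + 1)]
  obtain ⟨s, hs, hsmin⟩ : ∃ s, (et α s + et α (s + 1) ≤ ℓ₀) ∧
      ∀ n, n < s → ¬ (et α n + et α (n + 1) ≤ ℓ₀) :=
    ⟨Nat.find hPex, Nat.find_spec hPex, fun n hn => Nat.find_min hPex hn⟩
  -- hitting the arc forces T < q_{s+1}
  obtain ⟨t, ht, htf⟩ := hitting hα h0 h1 s (((i : ℝ) + 1) * α) y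
  have hTlt : T < nq α (s + 1) := by
    by_contra hcon
    push_neg at hcon
    have htT : t < T := lt_of_lt_of_le ht hcon
    apply havoid t htT
    have harg : ((i : ℝ) + 1) * α + (t : ℝ) * α - y = ((((i + t : ℕ) : ℝ) + 1) * α) - y := by
      push_cast; ring
    rw [harg, fract_sub_fract] at htf
    have hρlt : Int.fract (zf t - y) < ℓ₀ := lt_of_lt_of_le htf hs
    have hρ0 : 0 ≤ Int.fract (zf t - y) := Int.fract_nonneg _
    have hz0 : 0 ≤ zf t := Int.fract_nonneg _
    have hz1 : zf t < 1 := Int.fract_lt_one _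
    have hy1 : y ≤ 1 := by linarith [hlen, hyR1, hℓ₀pos]
    have hfl : ⌊zf t - y⌋ = 0 ∨ ⌊zf t - y⌋ = -1 := by
      have h1f : ⌊zf t - y⌋ < 1 := Int.floor_lt.2 (by push_cast; linarith)
      have h2f : (-1 : ℤ) ≤ ⌊zf t - y⌋ := Int.le_floor.2 (by push_cast; linarith)
      omega
    have hρeq : Int.fract (zf t - y) + (⌊zf t - y⌋ : ℝ) = zf t - y := Int.fract_add_floor _
    rcases hfl with h' | h'
    · rw [h'] at hρeq
      push_cast at hρeq
      constructor
      · linarith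
      · linarith [hlen]
    · rw [h'] at hρeq
      push_cast at hρeq
      exfalso
      linarith [hlen, hyR1]
  -- bound on q_{s+1}
  have hqc1 : ((nq α (s+1) : ℕ) : ℝ) = ((cfQ α (s+1) : ℤ) : ℝ) := by
    exact_mod_cast nq_cast hα (s + 1)
  have hbound : (cfQ α (s + 1) : ℝ) * ℓ₀ ≤ 2 * ((M : ℝ) + 2) + (M : ℝ) * ℓ₀ := by
    rcases Nat.eq_zero_or_pos s with hs0 | hs1
    · subst hs0
      have ha1 : (cfQ α 1 : ℝ) ≤ (M : ℝ) := by
        rw [q_one]; exact_mod_cast hM 1 (le_refl 1)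
      nlinarith [hℓ₀pos]
    · obtain ⟨s', rfl⟩ : ∃ s', s = s' + 1 := ⟨s - 1, by omega⟩
      have hmin := hsmin s' (by omega)
      push_neg at hmin
      have hdd := (et_dec hα h0 h1 s').le
      have hql : (cfQ α (s' + 1) : ℝ) * et α s' ≤ 1 := et_le hα h0 h1 s'
      have hqlpos : (1:ℝ) ≤ (cfQ α (s' + 1) : ℝ) := by
        exact_mod_cast q_pos hα (α := α) (s' + 1)
      have h2' : (cfQ α (s' + 1) : ℝ) * ℓ₀ < 2 := by nlinarith [et_pos hα h0 h1 s']
      have hgrow := q_growth hα M hM (s' + 1)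
      have hgrowR : (cfQ α (s' + 2) : ℝ) ≤ ((M : ℝ) + 2) * (cfQ α (s' + 1) : ℝ) := by
        exact_mod_cast hgrow
      have hMpos : (0:ℝ) < (M : ℝ) + 2 := by linarith
      nlinarith [hℓ₀pos, mul_le_mul_of_nonneg_right hgrowR hℓ₀pos.le]
  -- final chain
  have hTge : ((N : ℝ) - 1) * (m : ℝ) ≤ (T : ℝ) := by
    have h' : ((N - 1 : ℕ) : ℝ) * (m : ℝ) ≤ (T : ℝ) := by
      rw [hT]; push_cast; linarith [Nat.cast_nonneg (α := ℝ) u.length]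
    rw [Nat.cast_sub (by omega)] at h'
    push_cast at h'
    linarith
  have hTQ : (T : ℝ) < (cfQ α (s + 1) : ℝ) := by
    rw [← hqc1]
    exact_mod_cast hTlt
  have hchain : ((N : ℝ) - 1) * ((m : ℝ) * ℓ₀) < 2 * ((M : ℝ) + 2) + (M : ℝ) * ℓ₀ := by
    calc ((N : ℝ) - 1) * ((m : ℝ) * ℓ₀) = (((N : ℝ) - 1) * (m : ℝ)) * ℓ₀ := by ring
      _ ≤ (T : ℝ) * ℓ₀ := mul_le_mul_of_nonneg_right hTge hℓ₀pos.le
      _ < (cfQ α (s + 1) : ℝ) * ℓ₀ := by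
          exact mul_lt_mul_of_pos_right hTQ hℓ₀pos
      _ ≤ 2 * ((M : ℝ) + 2) + (M : ℝ) * ℓ₀ := hbound
  have hc' : c ≤ (m : ℝ) * ℓ₀ := by
    have hm1R : (1:ℝ) ≤ (m : ℝ) := by exact_mod_cast hm1
    rcases min_cases ε α₀ with ⟨he, _⟩ | ⟨he, _⟩
    · rw [hℓ₀, he]
      exact le_trans (min_le_left _ _) hmε
    · rw [hℓ₀, he]
      calc c ≤ α₀ := min_le_right _ _
        _ ≤ (m : ℝ) * α₀ := le_mul_of_one_le_left hα₀pos.le hm1R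
  have hℓhalf : ℓ₀ ≤ 1/2 := le_trans hℓ₀ε hεhalf
  have hN1 : (1 : ℝ) ≤ (N : ℝ) - 1 := by
    have : (2:ℝ) ≤ (N : ℝ) := by exact_mod_cast hN2
    linarith
  have hfin : ((N : ℝ) - 1) * c < 3 * (M : ℝ) + 4 := by
    have h' : ((N : ℝ) - 1) * c ≤ ((N : ℝ) - 1) * ((m : ℝ) * ℓ₀) :=
      mul_le_mul_of_nonneg_left hc' (by linarith)
    nlinarith [hM1R]
  have : (N : ℝ) - 1 < (3 * (M : ℝ) + 4) / c := by
    rw [lt_div_iff₀ hcpos]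
    exact hfin
  rw [hR]
  linarith

end SturmAux

/-- A Sturmian word of slope `α` has bounded fractional index iff the partial quotients
of `α` are bounded. -/
theorem bounded_index_iff_bounded_partial_quotients (α : ℝ) (hα : Irrational α)
    (h0 : 0 < α) (h1 : α < 1) :
    (∃ B : ℚ, ∀ w : List ℕ, w ≠ [] → InLang α w → ∀ r : ℚ, FracPowInLang α w r → r ≤ B) ↔
      (∃ M : ℤ, ∀ k : ℕ, 1 ≤ k → cfA α k ≤ M) := by
  
  constructor
  · rintro ⟨B, hB⟩
    exact ⟨⌈B⌉ + 1, SturmAux.dirA hα h0 h1 B hB⟩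
  · rintro ⟨M, hM⟩
    exact SturmAux.dirB hα h0 h1 M hM
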